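/- For all real numbers v and w, (1/4)(|v| + |w|) ≤ ∫₀¹ |w + s(v - w)| ds ≤ (1/2)(|v| + |w|). -/

import Mathlib

open intervalIntegral

lemma seg_integral (v w a b : ℝ) :
    (∫ s in a..b, (w + s * (v - w))) =
      (w * b + b ^ 2 / 2 * (v - w)) - (w * a + a ^ 2 / 2 * (v - w)) := by
  apply intervalIntegral.integral_eq_sub_of_hasDerivAt
  · intro x _
    have h := ((hasDerivAt_id x).const_mul w).add
      (((hasDerivAt_pow 2 x).div_const 2).mul_const (v - w))
    convert h using 1
    · rfl
    · norm_num <;> ring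
  · exact (Continuous.intervalIntegrable (by continuity) a b)

theorem integral_abs_segment_bounds (v w : ℝ) :
    (1/4) * (|v| + |w|) ≤ (∫ s in (0:ℝ)..1, |w + s * (v - w)|) ∧
    (∫ s in (0:ℝ)..1, |w + s * (v - w)|) ≤ (1/2) * (|v| + |w|) := by
  have hcont : Continuous fun s : ℝ => |w + s * (v - w)| := by continuity
  have hint : ∀ a b : ℝ, IntervalIntegrable (fun s : ℝ => |w + s * (v - w)|)
      MeasureTheory.volume a b := fun a b => hcont.intervalIntegrable a b
  constructor
  · -- lower bound
    have hsplit : (∫ s in (0:ℝ)..1, |w + s * (v - w)|) =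
        (∫ s in (0:ℝ)..(1/2), |w + s * (v - w)|) +
        (∫ s in (1/2:ℝ)..1, |w + s * (v - w)|) :=
      (intervalIntegral.integral_add_adjacent_intervals (hint 0 (1/2)) (hint (1/2) 1)).symm
    have h1 : |∫ s in (0:ℝ)..(1/2), (w + s * (v - w))| ≤
        ∫ s in (0:ℝ)..(1/2), |w + s * (v - w)| :=
      intervalIntegral.abs_integral_le_integral_abs (by norm_num)
    have h2 : |∫ s in (1/2:ℝ)..1, (w + s * (v - w))| ≤
        ∫ s in (1/2:ℝ)..1, |w + s * (v - w)| :=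
      intervalIntegral.abs_integral_le_integral_abs (by norm_num)
    have e1 : (∫ s in (0:ℝ)..(1/2), (w + s * (v - w))) = (v + 3 * w) / 8 := by
      rw [seg_integral]; ring
    have e2 : (∫ s in (1/2:ℝ)..1, (w + s * (v - w))) = (3 * v + w) / 8 := by
      rw [seg_integral]; ring
    rw [e1] at h1; rw [e2] at h2
    rw [hsplit]
    rcases abs_cases v with ⟨hv, _⟩ | ⟨hv, _⟩ <;>
      rcases abs_cases w with ⟨hw, _⟩ | ⟨hw, _⟩ <;>
      rcases abs_cases ((v + 3 * w) / 8) with ⟨h3, _⟩ | ⟨h3, _⟩ <;>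
      rcases abs_cases ((3 * v + w) / 8) with ⟨h4, _⟩ | ⟨h4, _⟩ <;>
      linarith
  · -- upper bound
    have hle : (∫ s in (0:ℝ)..1, |w + s * (v - w)|) ≤
        ∫ s in (0:ℝ)..1, ((1 - s) * |w| + s * |v|) := by
      apply intervalIntegral.integral_mono_on (by norm_num) (hint 0 1)
        ((Continuous.intervalIntegrable (by continuity) 0 1))
      intro s hs
      have hs0 : 0 ≤ s := hs.1
      have hs1 : s ≤ 1 := hs.2
      have : w + s * (v - w) = (1 - s) * w + s * v := by ring
      rw [this]
      calc |(1 - s) * w + s * v| ≤ |(1 - s) * w| + |s * v| := abs_add_le _ _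
        _ = (1 - s) * |w| + s * |v| := by
            rw [abs_mul, abs_mul, abs_of_nonneg (by linarith : (0:ℝ) ≤ 1 - s),
              abs_of_nonneg hs0]
    have e : (∫ s in (0:ℝ)..1, ((1 - s) * |w| + s * |v|)) = (1/2) * (|v| + |w|) := by
      have h := seg_integral |v| |w| 0 1
      have heq : (fun s : ℝ => (1 - s) * |w| + s * |v|) =
          fun s : ℝ => |w| + s * (|v| - |w|) := by funext s; ring
      rw [heq, h]; ring
    linarith
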